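/- Bol's identity: for r ∈ ℤ with r ≥ 2, every holomorphic function F on ℍ, and every g = [[a,b],[c,d]] ∈ SL₂(ℝ), one has ∂_z^{r-1}((cz+d)^{r-2} F(gz)) = (cz+d)^{-r} F^{(r-1)}(gz), i.e. ∂_z^{r-1}(F|_{2-r} g) = (∂_z^{r-1}F)|_r g. Consequently F ↦ c_r ∂_z^{r-1} F with c_r = i/(2(r-1)!) maps A_{2-r}(Γ,v) into A_r(Γ,v), with kernel consisting of the polynomials of degree ≤ r-2 that are automorphic (i.e., the constants when 2-r = 0 and v trivial, otherwise 0). -/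

import Mathlib

open Complex

noncomputable def mdenom (g : Matrix.SpecialLinearGroup (Fin 2) ℝ) (z : ℂ) : ℂ :=
  (g.1 1 0 : ℂ) * z + (g.1 1 1 : ℂ)

noncomputable def mact (g : Matrix.SpecialLinearGroup (Fin 2) ℝ) (z : ℂ) : ℂ :=
  ((g.1 0 0 : ℂ) * z + (g.1 0 1 : ℂ)) / mdenom g z

namespace BolAux
abbrev UH : Set ℂ := {z : ℂ | 0 < z.im}
lemma isOpen_UH : IsOpen UH := isOpen_lt continuous_const continuous_im

lemma det_eq (g : Matrix.SpecialLinearGroup (Fin 2) ℝ) :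
    g.1 0 0 * g.1 1 1 - g.1 0 1 * g.1 1 0 = 1 := by
  have h := g.2
  rw [Matrix.det_fin_two] at h
  linarith

lemma mdenom_ne_zero (g : Matrix.SpecialLinearGroup (Fin 2) ℝ) {z : ℂ} (hz : 0 < z.im) :
    mdenom g z ≠ 0 := by
  rcases eq_or_ne (g.1 1 0) 0 with hc | hc
  · have hd : g.1 1 1 ≠ 0 := by
      intro h; have := det_eq g; rw [hc, h] at this; simp at this
    simp [mdenom, hc, Complex.ofReal_ne_zero.2 hd]
  · intro h
    have him : (mdenom g z).im = g.1 1 0 * z.im := by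
      simp [mdenom]
    rw [h] at him
    simp at him
    rcases him with h1 | h2
    · exact hc h1
    · exact absurd h2 (ne_of_gt hz)

lemma mact_mem (g : Matrix.SpecialLinearGroup (Fin 2) ℝ) {z : ℂ} (hz : 0 < z.im) :
    0 < (mact g z).im := by
  have hv := mdenom_ne_zero g hz
  have h0 : 0 < Complex.normSq (mdenom g z) := Complex.normSq_pos.2 hv
  have him : (mact g z).im = z.im / Complex.normSq (mdenom g z) := by
    rw [mact, Complex.div_im]
    rw [div_sub_div_same]
    congr 1
    have hd := det_eq g
    simp [mdenom, Complex.add_im, Complex.add_re, Complex.mul_im, Complex.mul_re]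
    nlinarith [hd]
  rw [him]
  positivity

lemma hasDerivAt_mdenom (g : Matrix.SpecialLinearGroup (Fin 2) ℝ) (z : ℂ) :
    HasDerivAt (mdenom g) (g.1 1 0 : ℂ) z := by
  exact (((hasDerivAt_id z).const_mul ((g.1 1 0 : ℝ) : ℂ)).add_const ((g.1 1 1 : ℝ) : ℂ)).congr_deriv (by simp)

lemma detC (g : Matrix.SpecialLinearGroup (Fin 2) ℝ) :
    ((g.1 0 0 : ℝ) : ℂ) * ((g.1 1 1 : ℝ) : ℂ) - ((g.1 0 1 : ℝ) : ℂ) * ((g.1 1 0 : ℝ) : ℂ) = 1 := by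
  have := det_eq g
  exact_mod_cast this

lemma hasDerivAt_mact (g : Matrix.SpecialLinearGroup (Fin 2) ℝ) {z : ℂ} (hz : 0 < z.im) :
    HasDerivAt (mact g) ((mdenom g z) ^ (-2 : ℤ)) z := by
  have hv := mdenom_ne_zero g hz
  have hu : HasDerivAt (fun w => ((g.1 0 0 : ℝ) : ℂ) * w + ((g.1 0 1 : ℝ) : ℂ))
      ((g.1 0 0 : ℝ) : ℂ) z := by
    exact (((hasDerivAt_id z).const_mul ((g.1 0 0 : ℝ) : ℂ)).add_const ((g.1 0 1 : ℝ) : ℂ)).congr_deriv (by simp)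
  have h := hu.div (hasDerivAt_mdenom g z) hv
  refine h.congr_deriv ?_
  have h2 : (mdenom g z) ^ (-2 : ℤ) = 1 / (mdenom g z) ^ 2 := by
    rw [zpow_neg, one_div]
    norm_cast
  rw [h2]
  simp only [mdenom]
  congr 1
  linear_combination detC g

lemma hasDerivAt_core (g : Matrix.SpecialLinearGroup (Fin 2) ℝ) (m : ℤ) (G : ℂ → ℂ)
    {z : ℂ} (hz : 0 < z.im) (hG : DifferentiableAt ℂ G (mact g z)) :
    HasDerivAt (fun w => (mdenom g w) ^ m * G (mact g w))
      ((m : ℂ) * (g.1 1 0 : ℂ) * (mdenom g z) ^ (m - 1) * G (mact g z)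
        + (mdenom g z) ^ (m - 2) * deriv G (mact g z)) z := by
  have hv := mdenom_ne_zero g hz
  have h1 : HasDerivAt (fun w => (mdenom g w) ^ m)
      ((m : ℂ) * (mdenom g z) ^ (m - 1) * (g.1 1 0 : ℂ)) z := by
    exact
      (hasDerivAt_zpow m (mdenom g z) (Or.inl hv)).comp z (hasDerivAt_mdenom g z)
  have h2 : HasDerivAt (fun w => G (mact g w))
      (deriv G (mact g z) * (mdenom g z) ^ (-2 : ℤ)) z :=
    (hG.hasDerivAt.comp z (hasDerivAt_mact g hz))
  have h := h1.mul h2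
  refine h.congr_deriv ?_
  have e1 : (mdenom g z) ^ (m - 2) = (mdenom g z) ^ m * (mdenom g z) ^ (-2 : ℤ) := by
    rw [← zpow_add₀ hv, sub_eq_add_neg]
  rw [e1]; ring

lemma iteratedDeriv_congr_on {U : Set ℂ} (hU : IsOpen U) {f g : ℂ → ℂ}
    (h : ∀ x ∈ U, f x = g x) (n : ℕ) : ∀ z ∈ U, iteratedDeriv n f z = iteratedDeriv n g z := by
  induction n with
  | zero => simpa using h
  | succ n ih =>
    intro z hz
    rw [iteratedDeriv_succ, iteratedDeriv_succ]
    exact Filter.EventuallyEq.deriv_eq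
      (Filter.eventuallyEq_of_mem (hU.mem_nhds hz) fun w hw => ih w hw)

lemma analyticOnNhd_iteratedDeriv {f : ℂ → ℂ} {U : Set ℂ}
    (hf : AnalyticOnNhd ℂ f U) (n : ℕ) : AnalyticOnNhd ℂ (iteratedDeriv n f) U := by
  induction n with
  | zero => simpa [iteratedDeriv_zero] using hf
  | succ n ih => rw [iteratedDeriv_succ]; exact ih.deriv

lemma iteratedDeriv_add_on {U : Set ℂ} (hU : IsOpen U) {f g : ℂ → ℂ}
    (hf : AnalyticOnNhd ℂ f U) (hg : AnalyticOnNhd ℂ g U) (n : ℕ) :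
    ∀ z ∈ U, iteratedDeriv n (fun w => f w + g w) z = iteratedDeriv n f z + iteratedDeriv n g z := by
  induction n with
  | zero => simp
  | succ n ih =>
    intro z hz
    rw [iteratedDeriv_succ, iteratedDeriv_succ, iteratedDeriv_succ]
    have h1 : deriv (iteratedDeriv n fun w => f w + g w) z
        = deriv (fun w => iteratedDeriv n f w + iteratedDeriv n g w) z :=
      Filter.EventuallyEq.deriv_eq
        (Filter.eventuallyEq_of_mem (hU.mem_nhds hz) fun w hw => ih w hw)
    rw [h1]
    exact deriv_add ((analyticOnNhd_iteratedDeriv hf n z hz).differentiableAt)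
      ((analyticOnNhd_iteratedDeriv hg n z hz).differentiableAt)

lemma iteratedDeriv_const_mul_on {U : Set ℂ} (hU : IsOpen U) (a : ℂ) {f : ℂ → ℂ}
    (hf : AnalyticOnNhd ℂ f U) (n : ℕ) :
    ∀ z ∈ U, iteratedDeriv n (fun w => a * f w) z = a * iteratedDeriv n f z := by
  induction n with
  | zero => simp
  | succ n ih =>
    intro z hz
    rw [iteratedDeriv_succ, iteratedDeriv_succ]
    have h1 : deriv (iteratedDeriv n fun w => a * f w) z
        = deriv (fun w => a * iteratedDeriv n f w) z :=
      Filter.EventuallyEq.deriv_eq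
        (Filter.eventuallyEq_of_mem (hU.mem_nhds hz) fun w hw => ih w hw)
    rw [h1]
    exact deriv_const_mul a ((analyticOnNhd_iteratedDeriv hf n z hz).differentiableAt)

lemma analytic_core (g : Matrix.SpecialLinearGroup (Fin 2) ℝ) (m : ℤ) {G : ℂ → ℂ}
    (hG : AnalyticOnNhd ℂ G UH) :
    AnalyticOnNhd ℂ (fun w => (mdenom g w) ^ m * G (mact g w)) UH := by
  apply DifferentiableOn.analyticOnNhd _ isOpen_UH
  intro z hz
  exact (hasDerivAt_core g m G hz ((hG _ (mact_mem g hz)).differentiableAt)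
    ).differentiableAt.differentiableWithinAt


lemma bol_main : ∀ n : ℕ, ∀ F : ℂ → ℂ, AnalyticOnNhd ℂ F UH →
    ∀ g : Matrix.SpecialLinearGroup (Fin 2) ℝ, ∀ z : ℂ, 0 < z.im →
    iteratedDeriv n (fun w => (mdenom g w) ^ ((n : ℤ) - 1) * F (mact g w)) z
      = (mdenom g z) ^ (-(n : ℤ) - 1) * iteratedDeriv n F (mact g z) := by
  intro n
  induction n using Nat.strong_induction_on with
  | _ n IH =>
  intro F hF g z hz
  have hv := mdenom_ne_zero g hz
  match n with
  | 0 =>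
    simp only [iteratedDeriv_zero]
    norm_num
  | (k+1) =>
    rw [iteratedDeriv_succ']
    set c : ℂ := ((g.1 1 0 : ℝ) : ℂ) with hc
    set A : ℂ → ℂ := fun w => (mdenom g w) ^ ((k : ℤ) - 1) * F (mact g w) with hA
    set B : ℂ → ℂ := fun w => (mdenom g w) ^ ((k : ℤ) - 2) * (deriv F) (mact g w) with hB
    have hexp : ((k : ℤ) + 1) - 1 = (k : ℤ) := by ring
    have hstep : ∀ w, 0 < w.im →
        deriv (fun w => (mdenom g w) ^ (((k : ℕ) + 1 : ℤ) - 1) * F (mact g w)) w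
          = (k : ℂ) * c * A w + B w := by
      intro w hw
      have hGd : DifferentiableAt ℂ F (mact g w) := (hF _ (mact_mem g hw)).differentiableAt
      have h := (hasDerivAt_core g ((k : ℤ)) F hw hGd).deriv
      simp only [hexp]
      rw [h]
      push_cast
      ring
    have hcongr : iteratedDeriv k
          (deriv (fun w => (mdenom g w) ^ ((((k:ℕ)+1 : ℕ) : ℤ) - 1) * F (mact g w))) z
        = iteratedDeriv k (fun w => (k : ℂ) * c * A w + B w) z := by
      apply iteratedDeriv_congr_on isOpen_UH _ k z hz
      intro x hx
      have := hstep x hx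
      simpa using this
    rw [hcongr]
    have hAan : AnalyticOnNhd ℂ A UH := analytic_core g _ hF
    have hBan : AnalyticOnNhd ℂ B UH := analytic_core g _ hF.deriv
    rw [iteratedDeriv_add_on isOpen_UH (analyticOnNhd_const.mul hAan) hBan k z hz]
    rw [iteratedDeriv_const_mul_on isOpen_UH _ hAan k z hz]
    rw [hA, IH k (by omega) F hF g z hz]
    obtain _ | m := k
    ·
      simp only [hB, iteratedDeriv_zero, Nat.cast_zero, zero_add, iteratedDeriv_one]
      norm_num
    ·
      have hDG : AnalyticOnNhd ℂ (iteratedDeriv m (deriv F)) UH :=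
        analyticOnNhd_iteratedDeriv hF.deriv m
      have hBeq : ∀ x ∈ UH, iteratedDeriv m B x
          = (mdenom g x) ^ (-(m:ℤ)-1) * iteratedDeriv m (deriv F) (mact g x) := by
        intro x hx
        have e : (((m+1 : ℕ)) : ℤ) - 2 = (m:ℤ) - 1 := by push_cast; ring
        simp only [hB, e]
        exact IH m (by omega) (deriv F) hF.deriv g x hx
      have hBval : iteratedDeriv (m+1) B z = deriv (iteratedDeriv m B) z := by
        rw [iteratedDeriv_succ]
      have hstep2 : deriv (iteratedDeriv m B) z
          = deriv (fun w => (mdenom g w) ^ (-(m:ℤ)-1) * iteratedDeriv m (deriv F) (mact g w)) z :=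
        Filter.EventuallyEq.deriv_eq
          (Filter.eventuallyEq_of_mem (isOpen_UH.mem_nhds hz) hBeq)
      have hd := (hasDerivAt_core g (-(m:ℤ)-1) (iteratedDeriv m (deriv F)) hz
        ((hDG _ (mact_mem g hz)).differentiableAt)).deriv
      rw [hBval, hstep2, hd]
      have e1 : iteratedDeriv m (deriv F) = iteratedDeriv (m+1) F :=
        (iteratedDeriv_succ').symm
      rw [e1, ← iteratedDeriv_succ]
      have E1 : -(((m+1 : ℕ)) : ℤ) - 1 = -(m:ℤ) - 2 := by push_cast; ring
      have E2 : (-(m:ℤ) - 1) - 1 = -(m:ℤ) - 2 := by ring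
      have E3 : (-(m:ℤ) - 1) - 2 = -(m:ℤ) - 3 := by ring
      have E4 : -(((m+1+1 : ℕ)) : ℤ) - 1 = -(m:ℤ) - 3 := by push_cast; ring
      simp only [E1, E2, E3, E4]
      push_cast
      ring


lemma const_on_UH {f : ℂ → ℂ} (hf : DifferentiableOn ℂ f UH)
    (h0 : ∀ z ∈ UH, deriv f z = 0) : ∀ z ∈ UH, f z = f I := by
  intro z hz
  have hI : (I : ℂ) ∈ UH := by simp [UH]
  apply (convex_halfSpace_im_gt 0).is_const_of_fderivWithin_eq_zero hf _ hz hI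
  intro x hx
  have hdx : HasDerivAt f 0 x := by
    have := (hf x hx).differentiableAt (isOpen_UH.mem_nhds hx)
    simpa [h0 x hx] using this.hasDerivAt
  have : fderiv ℂ f x = 0 := by
    have h := hdx.hasFDerivAt.fderiv
    rw [h]
    ext
    simp
  rw [fderivWithin_of_isOpen isOpen_UH hx, this]

lemma const_of_kernel (w : ℂ) : ∀ n : ℕ, ∀ F : ℂ → ℂ, AnalyticOnNhd ℂ F UH →
    (∀ z ∈ UH, iteratedDeriv n F z = 0) → (∀ z ∈ UH, F (z + 1) = w * F z) →
    ∃ c : ℂ, (∀ z ∈ UH, F z = c) ∧ (c ≠ 0 → w = 1) := by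
  intro n
  induction n with
  | zero =>
    intro F _ h0 _
    exact ⟨0, fun z hz => by simpa using h0 z hz, by simp⟩
  | succ n ih =>
    intro F hF h0 hper
    have hadd : ∀ z : ℂ, z ∈ UH → z + 1 ∈ UH := by
      intro z hz; simpa [UH] using hz
    have hper' : ∀ z ∈ UH, deriv F (z + 1) = w * deriv F z := by
      intro z hz
      have h1 : deriv (fun x => F (x + 1)) z = deriv (fun x => w * F x) z :=
        Filter.EventuallyEq.deriv_eq (Filter.eventuallyEq_of_mem (isOpen_UH.mem_nhds hz)
          fun x hx => hper x hx)
      have h2 : deriv (fun x => F (x + 1)) z = deriv F (z + 1) := by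
        have := ((hF _ (hadd z hz)).differentiableAt.hasDerivAt).comp z
          ((hasDerivAt_id z).add_const 1)
        simpa [Function.comp_def] using this.deriv
      have h3 : deriv (fun x => w * F x) z = w * deriv F z :=
        deriv_const_mul w (hF z hz).differentiableAt
      rw [← h2, h1, h3]
    have h0' : ∀ z ∈ UH, iteratedDeriv n (deriv F) z = 0 := by
      intro z hz
      have := h0 z hz
      rwa [iteratedDeriv_succ'] at this
    obtain ⟨k, hk, hkw⟩ := ih (deriv F) hF.deriv h0' hper'
    have hI : (I : ℂ) ∈ UH := by simp [UH]
    by_cases hk0 : k = 0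
    · have hd0 : ∀ z ∈ UH, deriv F z = 0 := by
        intro z hz; rw [hk z hz, hk0]
      have hc := const_on_UH hF.differentiableOn hd0
      refine ⟨F I, hc, ?_⟩
      intro hne
      have h1 : F (I + 1) = w * F I := hper I hI
      rw [hc _ (hadd I hI)] at h1
      field_simp at h1
      tauto
    · exfalso
      have hw1 : w = 1 := hkw hk0
      have hlin : ∀ z ∈ UH, F z - k * z = F I - k * I := by
        have hdiff : DifferentiableOn ℂ (fun z => F z - k * z) UH :=
          hF.differentiableOn.sub ((differentiable_id.const_mul k).differentiableOn)
        have hd0 : ∀ z ∈ UH, deriv (fun z => F z - k * z) z = 0 := by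
          intro z hz
          have hkid : HasDerivAt (fun z : ℂ => k * z) k z := by
            simpa using (hasDerivAt_id z).const_mul k
          have h1 : HasDerivAt (fun z : ℂ => F z - k * z) (deriv F z - k) z :=
            ((hF z hz).differentiableAt.hasDerivAt).sub hkid
          rw [h1.deriv, hk z hz, sub_self]
        exact const_on_UH hdiff hd0
      have h1 := hper I hI
      rw [hw1, one_mul] at h1
      have h2 := hlin I hI
      have h3 := hlin (I + 1) (hadd I hI)
      rw [h1] at h3
      have : k = 0 := by linear_combination h2 - h3
      exact hk0 this

end BolAux

/-- Bol's identity: for `r ∈ ℤ`, `r ≥ 2`, every holomorphic `F₀` on ℍ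
and `g ∈ SL₂(ℝ)`, `∂_z^(r-1) (F₀|_{2-r} g) = (∂_z^(r-1) F₀)|_r g`.  Consequently,
for a group `Γ` (here containing the translation `T = [[1,1],[0,1]]` and some element
with nonzero lower-left entry, as holds for any cofinite group with a cusp at `∞`),
`F ↦ c_r ∂_z^(r-1) F` with `c_r = i/(2(r-1)!)` maps `A_{2-r}(Γ,v)` into `A_r(Γ,v)`,
and its kernel consists of the automorphic polynomials of degree ≤ r-2: the constants
when `r = 2` and `v` is trivial, and `0` otherwise. -/
theorem bol_identity_and_consequence (r : ℤ) (hr : 2 ≤ r)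
    (Γ : Subgroup (Matrix.SpecialLinearGroup (Fin 2) ℝ))
    (v : Matrix.SpecialLinearGroup (Fin 2) ℝ → ℂ)
    (F : ℂ → ℂ) (hF : DifferentiableOn ℂ F {z : ℂ | 0 < z.im})
    (hauto : ∀ γ ∈ Γ, ∀ z : ℂ, 0 < z.im →
        F (mact γ z) = v γ * (mdenom γ z) ^ ((2 : ℤ) - r) * F z)
    (hT : ∃ γT : Matrix.SpecialLinearGroup (Fin 2) ℝ, γT ∈ Γ ∧
        γT.1 0 0 = 1 ∧ γT.1 0 1 = 1 ∧ γT.1 1 0 = 0 ∧ γT.1 1 1 = 1)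
    (hhyp : ∃ γ₀ ∈ Γ, (γ₀ : Matrix.SpecialLinearGroup (Fin 2) ℝ).1 1 0 ≠ 0) :
    (∀ F₀ : ℂ → ℂ, DifferentiableOn ℂ F₀ {z : ℂ | 0 < z.im} →
        ∀ g : Matrix.SpecialLinearGroup (Fin 2) ℝ, ∀ z : ℂ, 0 < z.im →
          iteratedDeriv (r - 1).toNat
              (fun w => (mdenom g w) ^ (r - 2) * F₀ (mact g w)) z =
            (mdenom g z) ^ (-r) * iteratedDeriv (r - 1).toNat F₀ (mact g z)) ∧
    (DifferentiableOn ℂ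
        (fun z => Complex.I / (2 * ((r - 1).toNat.factorial : ℂ)) *
          iteratedDeriv (r - 1).toNat F z) {z : ℂ | 0 < z.im} ∧
      ∀ γ ∈ Γ, ∀ z : ℂ, 0 < z.im →
        Complex.I / (2 * ((r - 1).toNat.factorial : ℂ)) *
            iteratedDeriv (r - 1).toNat F (mact γ z) =
          v γ * (mdenom γ z) ^ r *
            (Complex.I / (2 * ((r - 1).toNat.factorial : ℂ)) *
              iteratedDeriv (r - 1).toNat F z)) ∧
    ((∀ z : ℂ, 0 < z.im → iteratedDeriv (r - 1).toNat F z = 0) →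
      ((r = 2 ∧ ∀ γ ∈ Γ, v γ = 1) → ∃ c : ℂ, ∀ z : ℂ, 0 < z.im → F z = c) ∧
      (¬ (r = 2 ∧ ∀ γ ∈ Γ, v γ = 1) → ∀ z : ℂ, 0 < z.im → F z = 0)) := by
  classical
  set n := (r - 1).toNat with hn
  have hnz : (n : ℤ) = r - 1 := Int.toNat_of_nonneg (by omega)
  have hFa : AnalyticOnNhd ℂ F BolAux.UH := hF.analyticOnNhd BolAux.isOpen_UH
  refine ⟨?_, ⟨?_, ?_⟩, ?_⟩
  · -- Part 1 : Bol's identity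
    intro F₀ hF₀ g z hz
    have hb := BolAux.bol_main n F₀ (hF₀.analyticOnNhd BolAux.isOpen_UH) g z hz
    have e1 : (n : ℤ) - 1 = r - 2 := by omega
    have e2 : -(n : ℤ) - 1 = -r := by omega
    rw [e1, e2] at hb
    exact hb
  · -- Part 2a : differentiability
    exact ((BolAux.analyticOnNhd_iteratedDeriv hFa n).differentiableOn).const_mul _
  · -- Part 2b : automorphy of weight r
    intro γ hγ z hz
    have hv := BolAux.mdenom_ne_zero γ hz
    have hb := BolAux.bol_main n F hFa γ z hz
    have heq : ∀ x ∈ BolAux.UH,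
        (mdenom γ x) ^ ((n : ℤ) - 1) * F (mact γ x) = v γ * F x := by
      intro x hx
      have hvx := BolAux.mdenom_ne_zero γ hx
      rw [hauto γ hγ x hx]
      have hzz : (mdenom γ x) ^ ((n : ℤ) - 1) * (mdenom γ x) ^ ((2 : ℤ) - r) = 1 := by
        rw [← zpow_add₀ hvx, show ((n : ℤ) - 1) + (2 - r) = 0 by omega, zpow_zero]
      calc (mdenom γ x) ^ ((n : ℤ) - 1) * (v γ * (mdenom γ x) ^ ((2 : ℤ) - r) * F x)
          = ((mdenom γ x) ^ ((n : ℤ) - 1) * (mdenom γ x) ^ ((2 : ℤ) - r)) * (v γ * F x) := by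
            ring
        _ = v γ * F x := by rw [hzz, one_mul]
    rw [BolAux.iteratedDeriv_congr_on BolAux.isOpen_UH heq n z hz] at hb
    rw [BolAux.iteratedDeriv_const_mul_on BolAux.isOpen_UH (v γ) hFa n z hz] at hb
    have e2 : -(n : ℤ) - 1 = -r := by omega
    rw [e2] at hb
    have hD : iteratedDeriv n F (mact γ z)
        = v γ * (mdenom γ z) ^ r * iteratedDeriv n F z := by
      have h3 : ∀ X : ℂ, (mdenom γ z) ^ r * ((mdenom γ z) ^ (-r) * X) = X := by
        intro X
        rw [← mul_assoc, ← zpow_add₀ hv, show r + -r = 0 by ring, zpow_zero, one_mul]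
      calc iteratedDeriv n F (mact γ z)
          = (mdenom γ z) ^ r * ((mdenom γ z) ^ (-r) * iteratedDeriv n F (mact γ z)) :=
            (h3 _).symm
        _ = (mdenom γ z) ^ r * (v γ * iteratedDeriv n F z) := by rw [← hb]
        _ = v γ * (mdenom γ z) ^ r * iteratedDeriv n F z := by ring
    rw [hD]; ring
  · -- Part 3 : kernel
    intro hker
    obtain ⟨γT, hγT, h00, h01, h10, h11⟩ := hT
    have hperF : ∀ z ∈ BolAux.UH, F (z + 1) = v γT * F z := by
      intro z hz
      have h := hauto γT hγT z hz
      have hm : mdenom γT z = 1 := by simp [mdenom, h10, h11]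
      have ha : mact γT z = z + 1 := by simp [mact, hm, h00, h01]
      rw [ha, hm] at h
      simpa using h
    obtain ⟨c, hc, _⟩ := BolAux.const_of_kernel (v γT) n F hFa (fun z hz => hker z hz) hperF
    constructor
    · rintro ⟨_, _⟩
      exact ⟨c, fun z hz => hc z hz⟩
    · intro hnot z hz
      rw [hc z hz]
      by_contra hc0
      apply hnot
      obtain ⟨γ₀, hγ₀, hc₀⟩ := hhyp
      have hI : (0 : ℝ) < Complex.I.im := by simp
      have hI2 : (0 : ℝ) < ((2 : ℂ) * Complex.I).im := by simp
      have key : ∀ x : ℂ, 0 < x.im → v γ₀ * (mdenom γ₀ x) ^ ((2 : ℤ) - r) = 1 := by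
        intro x hx
        have h := hauto γ₀ hγ₀ x hx
        rw [hc x hx, hc _ (BolAux.mact_mem γ₀ hx)] at h
        have h' : (v γ₀ * (mdenom γ₀ x) ^ ((2 : ℤ) - r)) * c = 1 * c := by
          linear_combination -h
        exact mul_right_cancel₀ hc0 h'
      have hr2 : r = 2 := by
        by_contra hne
        have k1 := key Complex.I hI
        have k2 := key ((2 : ℂ) * Complex.I) hI2
        have hv1 := BolAux.mdenom_ne_zero γ₀ hI
        have hv2 := BolAux.mdenom_ne_zero γ₀ hI2
        have hvγ : v γ₀ ≠ 0 := by
          intro h; rw [h, zero_mul] at k1; exact one_ne_zero k1.symm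
        have hXX : (mdenom γ₀ Complex.I) ^ ((2 : ℤ) - r)
            = (mdenom γ₀ ((2 : ℂ) * Complex.I)) ^ ((2 : ℤ) - r) :=
          mul_left_cancel₀ hvγ (k1.trans k2.symm)
        have habs : ‖mdenom γ₀ Complex.I‖ ^ ((2 : ℤ) - r)
            = ‖mdenom γ₀ ((2 : ℂ) * Complex.I)‖ ^ ((2 : ℤ) - r) := by
          rw [← norm_zpow, ← norm_zpow, hXX]
        set m : ℕ := (r - 2).toNat with hmdef
        have hmz : (m : ℤ) = r - 2 := Int.toNat_of_nonneg (by omega)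
        have hm2 : ((2 : ℤ) - r) = -(m : ℤ) := by omega
        rw [hm2, zpow_neg, zpow_neg, zpow_natCast, zpow_natCast, inv_inj] at habs
        have hmne : m ≠ 0 := by omega
        have h1 : Complex.normSq (mdenom γ₀ Complex.I)
            < Complex.normSq (mdenom γ₀ ((2 : ℂ) * Complex.I)) := by
          have hcr : ((γ₀ : Matrix.SpecialLinearGroup (Fin 2) ℝ).1 1 0 : ℝ) ≠ 0 := hc₀
          simp only [mdenom, Complex.normSq_apply, Complex.add_re, Complex.add_im,
            Complex.mul_re, Complex.mul_im, Complex.I_re, Complex.I_im,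
            Complex.ofReal_re, Complex.ofReal_im]
          norm_num
          nlinarith [mul_self_pos.mpr hcr]
        have hlt : ‖mdenom γ₀ Complex.I‖
            < ‖mdenom γ₀ ((2 : ℂ) * Complex.I)‖ := by
          rw [Complex.norm_def, Complex.norm_def]
          exact Real.sqrt_lt_sqrt (Complex.normSq_nonneg _) h1
        have hpow := pow_lt_pow_left₀ hlt (norm_nonneg _) hmne
        rw [habs] at hpow
        exact lt_irrefl _ hpow
      refine ⟨hr2, ?_⟩
      intro γ hγ
      have h := hauto γ hγ Complex.I hI
      rw [hc _ hI, hc _ (BolAux.mact_mem γ hI)] at h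
      rw [show (2 : ℤ) - r = 0 by omega, zpow_zero] at h
      have h' : (v γ) * c = 1 * c := by linear_combination -h
      simpa using mul_right_cancel₀ hc0 h'
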